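/- Let n_1 ≤ n_i for all i, n = ∏ n_i, and let A^R be the family of subspaces of F of the form A^{(1)} ⊗ F_q^{n_2} ⊗ ... ⊗ F_q^{n_r} (assuming n_1 < n_i for i ≥ 2). For a k-dimensional code C ≤ F, the Ravagnani-type generalized weights t_j^R satisfy t_j^R + n/n_1 ≤ t_{j + n/n_1}^R whenever j + n/n_1 ≤ k. -/

import Mathlib

open scoped Classical

noncomputable section

namespace TensorCodes

/-- The Gaussian (`q`-binomial) coefficient for integer arguments, following the
definition in the paper. -/
def qbin (q : ℚ) (a b : ℤ) : ℚ :=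
  if b < 0 then 0
  else if b = 0 then 1
  else if a < 0 then
    (-1) ^ b.toNat * q ^ (a * b - b * (b - 1) / 2) *
      ∏ i ∈ Finset.range b.toNat, (q ^ (-a + b - 1 - (i : ℤ)) - 1) / (q ^ ((i : ℤ) + 1) - 1)
  else if a < b then 0
  else ∏ i ∈ Finset.range b.toNat, (q ^ (a - (i : ℤ)) - 1) / (q ^ ((i : ℤ) + 1) - 1)

variable {K : Type} [Field K] [Fintype K] {r : ℕ} {n : Fin r → ℕ}

/-- A simple (rank-one) tensor `u⁽¹⁾ ⊗ ⋯ ⊗ u⁽ʳ⁾`, in the identification of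
`𝔽_q^{n_1} ⊗ ⋯ ⊗ 𝔽_q^{n_r}` with the space of `r`-dimensional arrays. -/
def simpleTensor (u : ∀ i, Fin (n i) → K) : ((i : Fin r) → Fin (n i)) → K :=
  fun J => ∏ i, u i (J i)

/-- The tensor product `U₁ ⊗ ⋯ ⊗ U_r` of subspaces `U i ≤ 𝔽_q^{n_i}`, identified with the
subspace of the array space spanned by the corresponding simple tensors. -/
def tp (U : ∀ i, Submodule K (Fin (n i) → K)) :
    Submodule K (((i : Fin r) → Fin (n i)) → K) :=
  Submodule.span K {X | ∃ u : ∀ i, Fin (n i) → K, (∀ i, u i ∈ U i) ∧ X = simpleTensor u}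

/-- The dual (orthogonal complement) of a tensor code with respect to the nondegenerate
bilinear form `X * Y = ∑_J X_J Y_J`. -/
def tdual (C : Submodule K (((i : Fin r) → Fin (n i)) → K)) :
    Submodule K (((i : Fin r) → Fin (n i)) → K) where
  carrier := {X | ∀ Y ∈ C, ∑ J, X J * Y J = 0}
  add_mem' := by
    intro a b ha hb Y hY
    have h : ∑ J, (a J * Y J + b J * Y J) = 0 := by
      rw [Finset.sum_add_distrib, ha Y hY, hb Y hY, add_zero]
    simpa [add_mul] using h
  zero_mem' := by intro Y hY; simp
  smul_mem' := by
    intro c a ha Y hY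
    have h := ha Y hY
    simp only [Pi.smul_apply, smul_eq_mul, mul_assoc]
    rw [← Finset.mul_sum, h, mul_zero]

/-- The orthogonal complement of a subspace of `𝔽_q^m` with respect to the dot product. -/
def vdual {m : ℕ} (U : Submodule K (Fin m → K)) : Submodule K (Fin m → K) where
  carrier := {x | ∀ y ∈ U, ∑ t, x t * y t = 0}
  add_mem' := by
    intro a b ha hb y hy
    have h : ∑ t, (a t * y t + b t * y t) = 0 := by
      rw [Finset.sum_add_distrib, ha y hy, hb y hy, add_zero]
    simpa [add_mul] using h
  zero_mem' := by intro y hy; simp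
  smul_mem' := by
    intro c a ha y hy
    have h := ha y hy
    simp only [Pi.smul_apply, smul_eq_mul, mul_assoc]
    rw [← Finset.mul_sum, h, mul_zero]

/-- A subspace is perfect if it is spanned by the simple (rank-one) tensors it contains. -/
def IsPerfect (A : Submodule K (((i : Fin r) → Fin (n i)) → K)) : Prop :=
  A = Submodule.span K ((A : Set (((i : Fin r) → Fin (n i)) → K)) ∩
    {X | ∃ u : ∀ i, Fin (n i) → K, X = simpleTensor u})

/-- The tensor rank of an `r`-tensor: the least number of simple tensors summing to it. -/
def trank (X : ((i : Fin r) → Fin (n i)) → K) : ℕ :=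
  sInf {R | ∃ u : Fin R → ∀ i, Fin (n i) → K, X = ∑ s, simpleTensor (u s)}

/-- The minimum tensor-rank distance of a (nonzero) tensor code. -/
def minDist (C : Submodule K (((i : Fin r) → Fin (n i)) → K)) : ℕ :=
  sInf {d | ∃ X ∈ C, X ≠ (0 : ((i : Fin r) → Fin (n i)) → K) ∧ trank X = d}

/-- The tensor rank of a tensor code: the minimum dimension of a perfect space containing it. -/
def trk (C : Submodule K (((i : Fin r) → Fin (n i)) → K)) : ℕ :=
  sInf {a | ∃ A : Submodule K (((i : Fin r) → Fin (n i)) → K),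
    IsPerfect A ∧ C ≤ A ∧ Module.finrank K ↥A = a}

/-- The `j`-th generalized tensor weight of `C` with respect to a collection `𝒜` of
anticodes:  the minimum dimension of a member of `𝒜` meeting `C` in dimension at least `j`. -/
def genW {V : Type} [AddCommGroup V] [Module K V] (𝒜 : Set (Submodule K V))
    (C : Submodule K V) (j : ℕ) : ℕ :=
  sInf {a | ∃ A ∈ 𝒜, Module.finrank K ↥A = a ∧ j ≤ Module.finrank K ↥(C ⊓ A)}




/-- test column space -/
def colSpace {n' : Fin (r + 1) → ℕ} (U : Submodule K (Fin (n' 0) → K)) :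
    Submodule K (((i : Fin (r + 1)) → Fin (n' i)) → K) where
  carrier := {X | ∀ J : (i : Fin r) → Fin (n' i.succ), (fun x => X (Fin.cons x J)) ∈ U}
  add_mem' := fun ha hb J => by exact U.add_mem (ha J) (hb J)
  zero_mem' := fun J => U.zero_mem
  smul_mem' := fun c a ha J => by exact U.smul_mem c (ha J)

def colEquiv {n' : Fin (r + 1) → ℕ} (U : Submodule K (Fin (n' 0) → K)) :
    ↥(colSpace U) ≃ₗ[K] (((i : Fin r) → Fin (n' i.succ)) → ↥U) where
  toFun X := fun J => ⟨fun x => X.1 (Fin.cons x J), X.2 J⟩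
  map_add' := fun X Y => rfl
  map_smul' := fun c X => rfl
  invFun f := ⟨fun J => (f (Fin.tail J)).1 (J 0), fun J => by
    simpa using (f J).2⟩
  left_inv := fun X => by
    apply Subtype.ext; funext J
    simp only []
    exact congrArg X.1 (Fin.cons_self_tail J)
  right_inv := fun f => by
    funext J; apply Subtype.ext; funext x
    simp [Fin.tail_cons]


lemma finrank_colSpace {n' : Fin (r + 1) → ℕ} (U : Submodule K (Fin (n' 0) → K)) :
    Module.finrank K ↥(colSpace U) = (∏ i : Fin r, n' i.succ) * Module.finrank K ↥U := by
  rw [(colEquiv U).finrank_eq, Module.finrank_pi_fintype]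
  simp [Finset.sum_const, Fintype.card_pi, mul_comm]

lemma prod_erase_eq {n' : Fin (r + 1) → ℕ} :
    ∏ i ∈ Finset.univ.erase (0 : Fin (r + 1)), n' i = ∏ i : Fin r, n' i.succ := by
  have h : (Finset.univ.erase (0 : Fin (r + 1)))
      = Finset.univ.map ⟨Fin.succ, Fin.succ_injective r⟩ := by
    ext i
    simp [Fin.exists_succ_eq]
  rw [h, Finset.prod_map]
  rfl

lemma exists_hyperplane {V : Type} [AddCommGroup V] [Module K V] [FiniteDimensional K V]
    (U : Submodule K V) (h : 1 ≤ Module.finrank K ↥U) :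
    ∃ U' : Submodule K V, U' ≤ U ∧ Module.finrank K ↥U' + 1 = Module.finrank K ↥U := by
  let b := Module.finBasis K ↥U
  let f : Module.Dual K ↥U := b.coord ⟨0, h⟩
  have hf : f ≠ 0 := by
    intro h0
    have h1 : f (b ⟨0, h⟩) = 1 := by simp [f]
    rw [h0] at h1
    simp at h1
  refine ⟨(LinearMap.ker f).map U.subtype, Submodule.map_subtype_le _ _, ?_⟩
  rw [Submodule.finrank_map_subtype_eq]
  exact Module.Dual.finrank_ker_add_one_of_ne_zero hf


lemma tp_update_eq_colSpace {n' : Fin (r + 1) → ℕ} (U : Submodule K (Fin (n' 0) → K)) :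
    tp (Function.update (fun j' => (⊤ : Submodule K (Fin (n' j') → K))) 0 U) = colSpace U := by
  apply le_antisymm
  · rw [tp, Submodule.span_le]
    rintro X ⟨u, hu, rfl⟩
    intro J
    have h0 : u 0 ∈ U := by simpa using hu 0
    have he : (fun x => simpleTensor u (Fin.cons x J))
        = (∏ i : Fin r, u i.succ (J i)) • u 0 := by
      funext x
      simp [simpleTensor, Fin.prod_univ_succ, mul_comm]
    rw [he]
    exact U.smul_mem _ h0
  · intro X hX
    have hrep : X = ∑ J : (i : Fin r) → Fin (n' i.succ),
        simpleTensor (Fin.cons (fun x => X (Fin.cons x J))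
          (fun i => Pi.single (J i) (1 : K))) := by
      funext J0
      rw [Finset.sum_apply]
      rw [Finset.sum_eq_single (Fin.tail J0)]
      · simp [simpleTensor, Fin.prod_univ_succ, Fin.cons_self_tail, Fin.tail, Pi.single_eq_same]
      · intro J _ hJ
        obtain ⟨i, hi⟩ : ∃ i, J i ≠ Fin.tail J0 i := by
          by_contra hc
          push_neg at hc
          exact hJ (funext hc)
        simp only [simpleTensor, Fin.prod_univ_succ, Fin.cons_zero, Fin.cons_succ]
        apply mul_eq_zero_of_right
        apply Finset.prod_eq_zero (Finset.mem_univ i)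
        rw [Pi.single_apply, if_neg]
        intro hc
        exact hi (hc.symm)
      · intro h
        exact absurd (Finset.mem_univ _) h
    rw [hrep]
    apply Submodule.sum_mem
    intro J _
    apply Submodule.subset_span
    refine ⟨Fin.cons (fun x => X (Fin.cons x J)) (fun i => Pi.single (J i) (1 : K)), ?_, rfl⟩
    intro i
    refine Fin.cases ?_ ?_ i
    · simpa using hX J
    · intro i'
      rw [Fin.cons_succ, Function.update_of_ne (Fin.succ_ne_zero i')]
      trivial

lemma colSpace_mono {n' : Fin (r + 1) → ℕ} {U U' : Submodule K (Fin (n' 0) → K)}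
    (h : U' ≤ U) : colSpace U' ≤ colSpace U :=
  fun _ hX J => h (hX J)

/-- for Ravagnani-type anticodes `A⁽¹⁾ ⊗ 𝔽_q^{n_2} ⊗ ⋯ ⊗ 𝔽_q^{n_r}`
(with `n_1 < n_i` for `i ≥ 2`), `t_j^R + n/n_1 ≤ t_{j+n/n_1}^R` whenever
`j + n/n_1 ≤ k`. -/
theorem genW_R_step {n : Fin (r + 1) → ℕ}
    (C : Submodule K (((i : Fin (r + 1)) → Fin (n i)) → K))
    (hn : ∀ i : Fin (r + 1), i ≠ 0 → n 0 < n i)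
    (j : ℕ) (hj : 1 ≤ j)
    (hjk : j + ∏ i ∈ Finset.univ.erase (0 : Fin (r + 1)), n i ≤ Module.finrank K ↥C) :
    genW {A | ∃ U : Submodule K (Fin (n 0) → K),
          A = tp (Function.update (fun j' => (⊤ : Submodule K (Fin (n j') → K))) 0 U)} C j
        + ∏ i ∈ Finset.univ.erase (0 : Fin (r + 1)), n i
      ≤ genW {A | ∃ U : Submodule K (Fin (n 0) → K),
          A = tp (Function.update (fun j' => (⊤ : Submodule K (Fin (n j') → K))) 0 U)} C
          (j + ∏ i ∈ Finset.univ.erase (0 : Fin (r + 1)), n i) := by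
  classical
  simp only [genW]
  set m := ∏ i ∈ Finset.univ.erase (0 : Fin (r + 1)), n i with hm
  have hm' : m = ∏ i : Fin r, n i.succ := prod_erase_eq
  set F : Set (Submodule K (((i : Fin (r + 1)) → Fin (n i)) → K)) :=
    {A | ∃ U : Submodule K (Fin (n 0) → K),
      A = tp (Function.update (fun j' => (⊤ : Submodule K (Fin (n j') → K))) 0 U)} with hF
  have htop : colSpace (⊤ : Submodule K (Fin (n 0) → K)) = ⊤ :=
    le_antisymm le_top (fun X _ J => Submodule.mem_top)
  have hSne : {a | ∃ A ∈ F, Module.finrank K ↥A = a ∧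
      j + m ≤ Module.finrank K ↥(C ⊓ A)}.Nonempty := by
    refine ⟨_, tp (Function.update (fun j' =>
      (⊤ : Submodule K (Fin (n j') → K))) 0 ⊤), ⟨⊤, rfl⟩, rfl, ?_⟩
    rw [tp_update_eq_colSpace, htop, inf_top_eq]
    exact hjk
  obtain ⟨A, hAF, hrank, hint⟩ := Nat.sInf_mem hSne
  obtain ⟨U, rfl⟩ := hAF
  have hAr : Module.finrank K ↥(tp (Function.update (fun j' =>
      (⊤ : Submodule K (Fin (n j') → K))) 0 U)) = m * Module.finrank K ↥U := by
    rw [tp_update_eq_colSpace, finrank_colSpace, hm']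
  have hd1 : 1 ≤ Module.finrank K ↥U := by
    rcases Nat.eq_zero_or_pos (Module.finrank K ↥U) with h | h
    swap
    · exact h
    exfalso
    have h0 : Module.finrank K ↥(C ⊓ tp (Function.update (fun j' =>
        (⊤ : Submodule K (Fin (n j') → K))) 0 U))
        ≤ m * Module.finrank K ↥U := hAr ▸ Submodule.finrank_mono inf_le_right
    rw [h, mul_zero] at h0
    omega
  obtain ⟨U', hU'le, hU'rank⟩ := exists_hyperplane U hd1
  set A' := tp (Function.update (fun j' => (⊤ : Submodule K (Fin (n j') → K))) 0 U') with hA'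
  have hA'F : A' ∈ F := ⟨U', rfl⟩
  have hA'r : Module.finrank K ↥A' = m * Module.finrank K ↥U' := by
    rw [hA', tp_update_eq_colSpace, finrank_colSpace, hm']
  have hA'le : A' ≤ tp (Function.update (fun j' =>
      (⊤ : Submodule K (Fin (n j') → K))) 0 U) := by
    rw [hA', tp_update_eq_colSpace, tp_update_eq_colSpace]
    exact colSpace_mono hU'le
  set W := C ⊓ tp (Function.update (fun j' =>
    (⊤ : Submodule K (Fin (n j') → K))) 0 U) with hW
  have hkey := Submodule.finrank_sup_add_finrank_inf_eq W A'
  have hsup : Module.finrank K ↥(W ⊔ A') ≤ m * Module.finrank K ↥U :=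
    hAr ▸ Submodule.finrank_mono (sup_le inf_le_right hA'le)
  have hCA' : C ⊓ A' = W ⊓ A' := by
    rw [hW, inf_assoc, inf_eq_right.mpr hA'le]
  set p := m * Module.finrank K ↥U' with hp
  have hmd : m * Module.finrank K ↥U = p + m := by
    rw [hp, ← hU'rank, Nat.mul_succ]
  have hjint : j ≤ Module.finrank K ↥(C ⊓ A') := by
    rw [hCA']
    omega
  have hle : sInf {a | ∃ A ∈ F, Module.finrank K ↥A = a ∧
      j ≤ Module.finrank K ↥(C ⊓ A)} ≤ p :=
    Nat.sInf_le ⟨A', hA'F, by rw [hA'r], hjint⟩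
  omega

end TensorCodes
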